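/- Suppose x, y, u, v ∈ ℝ satisfy v² + y² = (x² + u²)² and vu + yx = 0 and vx − yu ≥ 0. Then yu ≤ 0 and vx ≥ 0; moreover u = 0 if and only if y = 0, and v = 0 if and only if x = 0. -/
import Mathlib

lemma sumsq_zero_aux {x u : ℝ} (h : 0 = (x ^ 2 + u ^ 2) ^ 2) : x = 0 ∧ u = 0 := by
  have hs : x ^ 2 + u ^ 2 = 0 := by
    have := pow_eq_zero_iff (n := 2) (two_ne_zero) |>.mp h.symm
    exact this
  have hx : x ^ 2 = 0 := by nlinarith [sq_nonneg u]
  have hu : u ^ 2 = 0 := by nlinarith [sq_nonneg x]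
  exact ⟨pow_eq_zero_iff two_ne_zero |>.mp hx, pow_eq_zero_iff two_ne_zero |>.mp hu⟩

theorem harvey_lawson_signs (x y u v : ℝ)
    (h1 : v ^ 2 + y ^ 2 = (x ^ 2 + u ^ 2) ^ 2)
    (h2 : v * u + y * x = 0)
    (h3 : v * x - y * u ≥ 0) :
    y * u ≤ 0 ∧ v * x ≥ 0 ∧ (u = 0 ↔ y = 0) ∧ (v = 0 ↔ x = 0) := by
  have key : (v * x) * (y * u) = -(y * x) ^ 2 := by linear_combination (x * y) * h2
  have hyu : y * u ≤ 0 := by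
    by_contra h
    push_neg at h
    have hvp : 0 < v * x := lt_of_lt_of_le h (by linarith)
    nlinarith [mul_pos hvp h, sq_nonneg (y * x)]
  have hvx : v * x ≥ 0 := by
    by_contra h
    push_neg at h
    have h4 : v * x * (y * u) ≥ 0 := by nlinarith
    have h5 : v * x * (y * u) = 0 := by nlinarith [sq_nonneg (y * x)]
    rcases mul_eq_zero.mp h5 with h6 | h6
    · exact absurd h6 (ne_of_lt h)
    · linarith
  refine ⟨hyu, hvx, ?_, ?_⟩
  · constructor
    · intro hu
      subst hu
      have hx : y * x = 0 := by linarith [h2]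
      rcases mul_eq_zero.mp hx with hy | hx0
      · exact hy
      · subst hx0
        have h0 : v = 0 ∧ y = 0 := by
          have := sumsq_zero_aux (x := v) (u := y) (by nlinarith)
          exact this
        exact h0.2
    · intro hy
      subst hy
      have hv : v * u = 0 := by linarith [h2]
      rcases mul_eq_zero.mp hv with hv0 | hu
      · subst hv0
        exact (sumsq_zero_aux (by nlinarith)).2
      · exact hu
  · constructor
    · intro hv
      subst hv
      have hx : y * x = 0 := by linarith [h2]
      rcases mul_eq_zero.mp hx with hy | hx0
      · subst hy
        exact (sumsq_zero_aux (by nlinarith)).1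
      · exact hx0
    · intro hx
      subst hx
      have hv : v * u = 0 := by linarith [h2]
      rcases mul_eq_zero.mp hv with hv0 | hu0
      · exact hv0
      · subst hu0
        exact (sumsq_zero_aux (x := v) (u := y) (by nlinarith)).1
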